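/- Let f, g be strictly positive integrable random variables with E f = E g = 1, let G ⊆ F be a sub-σ-algebra and A ∈ G. Define the pasting f ⊗_A g := f on A^c and f ⊗_A g := E[f|G]·g/E[g|G] on A. Then f ⊗_A g is strictly positive, integrable, satisfies E[f ⊗_A g] = 1, and E[f ⊗_A g | G] = E[f | G] almost surely. -/

import Mathlib

open MeasureTheory

open scoped ENNReal

private lemma condexp_pos_aux {Ω : Type*} {F : MeasurableSpace Ω} (μ : Measure Ω)
    [IsProbabilityMeasure μ] (G : MeasurableSpace Ω) (hG : G ≤ F)
    (g : Ω → ℝ) (hg : Integrable g μ) (hgpos : ∀ᵐ ω ∂μ, 0 < g ω) :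
    ∀ᵐ ω ∂μ, 0 < (μ[g | G]) ω := by
  set c := μ[g | G] with hc
  have hcm : StronglyMeasurable[G] c := stronglyMeasurable_condExp
  have hSG : MeasurableSet[G] (c ⁻¹' Set.Iic 0) := hcm.measurable measurableSet_Iic
  set S : Set Ω := c ⁻¹' Set.Iic 0 with hSdef
  have hS : MeasurableSet[F] S := hG _ hSG
  have hg0 : 0 ≤ᵐ[μ] g := hgpos.mono fun ω h => h.le
  have h1 : ∫ ω in S, c ω ∂μ = ∫ ω in S, g ω ∂μ := setIntegral_condExp hG hg hSG
  have h2 : ∫ ω in S, c ω ∂μ ≤ 0 := @setIntegral_nonpos Ω F μ c S hS (fun ω hω => hω)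
  have h3 : 0 ≤ ∫ ω in S, g ω ∂μ := integral_nonneg_of_ae (ae_restrict_of_ae hg0)
  have h4 : ∫ ω in S, g ω ∂μ = 0 := le_antisymm (h1 ▸ h2) h3
  have h5 : g =ᵐ[μ.restrict S] 0 :=
    (integral_eq_zero_iff_of_nonneg_ae (ae_restrict_of_ae hg0) hg.restrict).mp h4
  have h6 : μ S = 0 := by
    have hFalse : ∀ᵐ ω ∂(μ.restrict S), False := by
      filter_upwards [h5, ae_restrict_of_ae hgpos] with ω h0 hpos
      rw [Pi.zero_apply] at h0
      exact absurd h0 (ne_of_gt hpos)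
    have : μ.restrict S = 0 := ae_eq_bot.mp (Filter.eventually_false_iff_eq_bot.mp hFalse)
    exact Measure.restrict_eq_zero.mp this
  rw [ae_iff]
  convert h6 using 2
  ext ω
  simp [hSdef, not_lt]

private lemma lintegral_mul_condexp_aux {Ω : Type*} {F : MeasurableSpace Ω} (μ : Measure Ω)
    [IsProbabilityMeasure μ] (G : MeasurableSpace Ω) (hG : G ≤ F)
    (g : Ω → ℝ) (hg : Integrable g μ) (hg0 : 0 ≤ᵐ[μ] g) :
    ∀ ⦃H : Ω → ℝ≥0∞⦄, Measurable[G] H →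
      ∫⁻ ω, H ω * ENNReal.ofReal (g ω) ∂μ = ∫⁻ ω, H ω * ENNReal.ofReal ((μ[g | G]) ω) ∂μ := by
  have hc0 : 0 ≤ᵐ[μ] μ[g | G] := condExp_nonneg hg0
  have hgm : AEMeasurable (fun ω => ENNReal.ofReal (g ω)) μ :=
    hg.aemeasurable.ennreal_ofReal
  have hcm : Measurable[F] (fun ω => ENNReal.ofReal ((μ[g | G]) ω)) :=
    ((stronglyMeasurable_condExp.mono hG).measurable).ennreal_ofReal
  refine @Measurable.ennreal_induction Ω G
    (fun H => ∫⁻ ω, H ω * ENNReal.ofReal (g ω) ∂μ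
      = ∫⁻ ω, H ω * ENNReal.ofReal ((μ[g | G]) ω) ∂μ) ?_ ?_ ?_
  · intro c s hs
    have e : ∀ (x : Ω → ℝ≥0∞),
        (fun ω => s.indicator (fun _ => c) ω * x ω)
          = fun ω => s.indicator (fun ω => c * x ω) ω := by
      intro x; ext ω; by_cases h : ω ∈ s <;> simp [h]
    have key : ∫⁻ ω in s, ENNReal.ofReal (g ω) ∂μ
        = ∫⁻ ω in s, ENNReal.ofReal ((μ[g | G]) ω) ∂μ := by
      rw [← ofReal_integral_eq_lintegral_ofReal hg.restrict (ae_restrict_of_ae hg0),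
        ← ofReal_integral_eq_lintegral_ofReal integrable_condExp.restrict (ae_restrict_of_ae hc0),
        setIntegral_condExp hG hg hs]
    rw [e, e, lintegral_indicator (μ := μ) (hG _ hs), lintegral_indicator (μ := μ) (hG _ hs),
      lintegral_const_mul'' c hgm.restrict, lintegral_const_mul'' c hcm.aemeasurable.restrict, key]
  · intro H1 H2 _ h1m h2m ih1 ih2
    have h1m' : AEMeasurable H1 μ := (h1m.mono hG le_rfl).aemeasurable
    have h2m' : AEMeasurable H2 μ := (h2m.mono hG le_rfl).aemeasurable
    simp only [Pi.add_apply, add_mul]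
    rw [lintegral_add_left' (f := fun ω => H1 ω * ENNReal.ofReal (g ω)) (h1m'.mul hgm),
      lintegral_add_left' (f := fun ω => H1 ω * ENNReal.ofReal ((μ[g | G]) ω))
        (h1m'.mul hcm.aemeasurable),
      ih1, ih2]
  · intro Hs hmeas hmono ih
    have hm' : ∀ n, AEMeasurable (Hs n) μ := fun n => ((hmeas n).mono hG le_rfl).aemeasurable
    simp only [ENNReal.iSup_mul]
    rw [lintegral_iSup' (f := fun n ω => Hs n ω * ENNReal.ofReal (g ω)) (fun n => (hm' n).mul hgm)
        (Filter.Eventually.of_forall fun ω n m hnm => mul_le_mul_left (hmono hnm ω) _),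
      lintegral_iSup' (f := fun n ω => Hs n ω * ENNReal.ofReal ((μ[g | G]) ω))
        (fun n => (hm' n).mul hcm.aemeasurable)
        (Filter.Eventually.of_forall fun ω n m hnm => mul_le_mul_left (hmono hnm ω) _)]
    exact iSup_congr ih

/-- The pasting `f ⊗_A g` of two strictly positive densities along an event
`A ∈ G` is a strictly positive density whose `G`-conditional expectation
agrees with that of `f`. -/
theorem pasting_of_densities
    {Ω : Type*} {F : MeasurableSpace Ω} (μ : Measure Ω) [IsProbabilityMeasure μ]
    (G : MeasurableSpace Ω) (hG : G ≤ F)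
    (A : Set Ω) (hA : MeasurableSet[G] A)
    (f g : Ω → ℝ) (hf : Integrable f μ) (hg : Integrable g μ)
    (hfpos : ∀ᵐ ω ∂μ, 0 < f ω) (hgpos : ∀ᵐ ω ∂μ, 0 < g ω)
    (hfint : ∫ ω, f ω ∂μ = 1) (hgint : ∫ ω, g ω ∂μ = 1)
    (p : Ω → ℝ)
    (hp : p = fun ω => Aᶜ.indicator f ω +
      A.indicator (fun ω' => (μ[f | G]) ω' * g ω' / (μ[g | G]) ω') ω) :
    (∀ᵐ ω ∂μ, 0 < p ω) ∧ Integrable p μ ∧ (∫ ω, p ω ∂μ = 1) ∧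
      (μ[p | G]) =ᵐ[μ] (μ[f | G]) := by
  set cf := μ[f | G] with hcf_def
  set cg := μ[g | G] with hcg_def
  have hcf : StronglyMeasurable[G] cf := stronglyMeasurable_condExp
  have hcg : StronglyMeasurable[G] cg := stronglyMeasurable_condExp
  have hcfpos : ∀ᵐ ω ∂μ, 0 < cf ω := condexp_pos_aux μ G hG f hf hfpos
  have hcgpos : ∀ᵐ ω ∂μ, 0 < cg ω := condexp_pos_aux μ G hG g hg hgpos
  have hf0 : 0 ≤ᵐ[μ] f := hfpos.mono fun ω h => h.le
  have hg0 : 0 ≤ᵐ[μ] g := hgpos.mono fun ω h => h.le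
  have hcf0 : 0 ≤ᵐ[μ] cf := hcfpos.mono fun ω h => h.le
  have hAF : MeasurableSet[F] A := hG _ hA
  set q : Ω → ℝ := A.indicator (fun ω => cf ω * g ω / cg ω) with hq
  set h' : Ω → ℝ := A.indicator (fun ω => cf ω / cg ω) with hh'
  have hq' : q = h' * g := by
    ext ω
    by_cases hω : ω ∈ A
    · simp only [hq, hh', Pi.mul_apply, Set.indicator_of_mem hω]
      ring
    · simp [hq, hh', Set.indicator_of_notMem hω]
  have hh'm : StronglyMeasurable[G] h' :=
    Measurable.stronglyMeasurable ((hcf.measurable.div hcg.measurable).indicator hA)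
  have hqsm : AEStronglyMeasurable[F] q μ := by
    rw [hq']
    exact (hh'm.mono hG).aestronglyMeasurable.mul hg.1
  have hq0 : 0 ≤ᵐ[μ] q := by
    filter_upwards [hcfpos, hcgpos, hgpos] with ω h3 h4 h2
    by_cases hω : ω ∈ A
    · simp only [hq, Set.indicator_of_mem hω]
      exact (div_pos (mul_pos h3 h2) h4).le
    · simp [hq, Set.indicator_of_notMem hω]
  set H : Ω → ℝ≥0∞ := A.indicator (fun ω => ENNReal.ofReal (cf ω / cg ω)) with hH
  have hHm : Measurable[G] H :=
    ((hcf.measurable.div hcg.measurable).ennreal_ofReal).indicator hA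
  have key := lintegral_mul_condexp_aux μ G hG g hg hg0 hHm
  have e1 : (fun ω => ENNReal.ofReal (q ω)) =ᵐ[μ] fun ω => H ω * ENNReal.ofReal (g ω) := by
    filter_upwards [hcfpos, hcgpos] with ω h3 h4
    by_cases hω : ω ∈ A
    · simp only [hq, hH, Set.indicator_of_mem hω]
      have hrw : cf ω * g ω / cg ω = cf ω / cg ω * g ω := by ring
      rw [hrw, ENNReal.ofReal_mul (div_nonneg h3.le h4.le)]
    · simp [hq, hH, Set.indicator_of_notMem hω]
  have e2 : (fun ω => H ω * ENNReal.ofReal (cg ω))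
      =ᵐ[μ] fun ω => ENNReal.ofReal (A.indicator cf ω) := by
    filter_upwards [hcfpos, hcgpos] with ω h3 h4
    by_cases hω : ω ∈ A
    · simp only [hH, Set.indicator_of_mem hω]
      rw [← ENNReal.ofReal_mul (div_nonneg h3.le h4.le), div_mul_cancel₀ _ (ne_of_gt h4)]
    · simp [hH, Set.indicator_of_notMem hω]
  have hicf : Integrable (A.indicator cf) μ :=
    (integrable_condExp (m := G) (f := f)).indicator hAF
  have hicf0 : 0 ≤ᵐ[μ] A.indicator cf :=
    hcf0.mono fun ω h => Set.indicator_apply_nonneg fun _ => h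
  have hlq : ∫⁻ ω, ENNReal.ofReal (q ω) ∂μ = ENNReal.ofReal (∫ ω in A, cf ω ∂μ) := by
    rw [lintegral_congr_ae e1, key, lintegral_congr_ae e2,
      ← ofReal_integral_eq_lintegral_ofReal hicf hicf0,
      integral_indicator (μ := μ) hAF]
  have hqint : Integrable q μ :=
    ⟨hqsm, (hasFiniteIntegral_iff_ofReal hq0).mpr (by rw [hlq]; exact ENNReal.ofReal_lt_top)⟩
  have hqval : ∫ ω, q ω ∂μ = ∫ ω in A, f ω ∂μ := by
    rw [integral_eq_lintegral_of_nonneg_ae hq0 hqsm, hlq,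
      ENNReal.toReal_ofReal (integral_nonneg_of_ae (ae_restrict_of_ae hcf0)),
      setIntegral_condExp hG hf hA]
  have hpdecomp : p = Aᶜ.indicator f + q := by
    ext ω; simp [hp, hq]
  have hind : Integrable (Aᶜ.indicator f) μ :=
    hf.indicator hAF.compl
  refine ⟨?_, ?_, ?_, ?_⟩
  · filter_upwards [hfpos, hgpos, hcfpos, hcgpos] with ω h1 h2 h3 h4
    rw [hp, hq]
    by_cases hω : ω ∈ A
    · have : ω ∉ Aᶜ := fun h => h hω
      simp only [Set.indicator_of_notMem this, Set.indicator_of_mem hω, zero_add]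
      exact div_pos (mul_pos h3 h2) h4
    · simp only [Set.indicator_of_mem (Set.mem_compl hω), Set.indicator_of_notMem hω, add_zero]
      exact h1
  · rw [hpdecomp]; exact hind.add hqint
  · rw [hpdecomp]
    simp only [Pi.add_apply]
    rw [integral_add hind hqint, integral_indicator (μ := μ) hAF.compl, hqval, add_comm,
      integral_add_compl hAF hf, hfint]
  · have c1 : μ[p | G] =ᵐ[μ] μ[Aᶜ.indicator f | G] + μ[q | G] := by
      rw [hpdecomp]; exact condExp_add hind hqint G
    have c2 : μ[Aᶜ.indicator f | G] =ᵐ[μ] Aᶜ.indicator cf := condExp_indicator hf hA.compl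
    have c3 : μ[q | G] =ᵐ[μ] h' * cg := by
      rw [hq']; exact condExp_mul_of_stronglyMeasurable_left hh'm (hq' ▸ hqint) hg
    have c4 : (h' * cg : Ω → ℝ) =ᵐ[μ] A.indicator cf := by
      filter_upwards [hcgpos] with ω h4
      by_cases hω : ω ∈ A
      · simp only [hh', Pi.mul_apply, Set.indicator_of_mem hω]
        exact div_mul_cancel₀ _ (ne_of_gt h4)
      · simp [hh', Set.indicator_of_notMem hω]
    filter_upwards [c1, c2, c3, c4] with ω d1 d2 d3 d4
    rw [d1, Pi.add_apply, d2, d3, d4, ← Pi.add_apply, add_comm,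
      Set.indicator_self_add_compl A cf]
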